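/- Let μ be the standard Gaussian measure on ℝ, b ∈ (0, 1/2), and f(x) = x e^{b x²/2}. Then f ∈ L²(μ), ∫ f dμ = 0, and f satisfies the eigenfunction equation (1+bx²)^{-1} f''(x) − ((2b+1)x + b x³)(1+bx²)^{-2} f'(x) = −(1−b) f(x) for all x. -/

import Mathlib

open Real MeasureTheory

/-- For the standard Gaussian measure `μ`, `b ∈ (0,1/2)` and `f(x) = x e^{bx²/2}`,
the function `f` is in `L²(μ)`, is centered, and satisfies the eigenfunction equation
`σ² f'' + ((σ²)' - σ² V') f' = -(1-b) f` with `σ²(x) = 1/(1+bx²)` and `V(x) = x²/2`. -/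
theorem gaussian_weighted_eigenfunction (b : ℝ) (hb : b ∈ Set.Ioo (0:ℝ) (1/2))
    (μ : Measure ℝ)
    (hμ : μ = MeasureTheory.volume.withDensity fun x =>
      ENNReal.ofReal ((Real.sqrt (2 * π))⁻¹ * Real.exp (-(x ^ 2) / 2)))
    (f : ℝ → ℝ) (hf : f = fun x => x * Real.exp (b * x ^ 2 / 2)) :
    MemLp f 2 μ ∧ (∫ x, f x ∂μ) = 0 ∧
    ∀ x : ℝ,
      (1 + b * x ^ 2)⁻¹ * deriv (deriv f) x -
        ((2 * b + 1) * x + b * x ^ 3) / (1 + b * x ^ 2) ^ 2 * deriv f x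
      = -(1 - b) * f x := by
  obtain ⟨hb0, hb2⟩ := hb
  have hcont : Continuous f := by
    rw [hf]; fun_prop
  have hdens_meas : Measurable fun x : ℝ =>
      ENNReal.ofReal ((Real.sqrt (2 * π))⁻¹ * Real.exp (-(x ^ 2) / 2)) := by
    fun_prop
  have hdens_lt : ∀ᵐ x ∂(volume : Measure ℝ),
      (ENNReal.ofReal ((Real.sqrt (2 * π))⁻¹ * Real.exp (-(x ^ 2) / 2))) < ⊤ :=
    Filter.Eventually.of_forall fun x => ENNReal.ofReal_lt_top
  have hc : 0 < (Real.sqrt (2 * π))⁻¹ := by positivity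
  -- Part 1 : Memℒp
  have h1 : MemLp f 2 μ := by
    rw [memLp_two_iff_integrable_sq (hcont.aestronglyMeasurable)]
    rw [hμ, integrable_withDensity_iff hdens_meas hdens_lt]
    have key : Integrable (fun x : ℝ => x ^ ((2:ℝ)) * Real.exp (-(1/2 - b) * x ^ 2)) volume :=
      integrable_rpow_mul_exp_neg_mul_sq (by linarith) (s := 2) (by norm_num)
    refine (key.const_mul ((Real.sqrt (2 * π))⁻¹)).congr
      (Filter.Eventually.of_forall fun x => ?_)
    have ht : ((ENNReal.ofReal ((Real.sqrt (2 * π))⁻¹ * Real.exp (-(x ^ 2) / 2))).toReal)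
        = (Real.sqrt (2 * π))⁻¹ * Real.exp (-(x ^ 2) / 2) :=
      ENNReal.toReal_ofReal (by positivity)
    simp only [hf, ht, Real.rpow_two]
    have e : Real.exp (-(1/2 - b) * x ^ 2)
        = Real.exp (b * x ^ 2 / 2) ^ 2 * Real.exp (-(x ^ 2) / 2) := by
      rw [pow_two (Real.exp (b * x ^ 2 / 2)), ← Real.exp_add, ← Real.exp_add]
      congr 1; ring
    rw [mul_pow, e]; ring
  refine ⟨h1, ?_, ?_⟩
  -- Part 2 : centered
  · rw [hμ]
    simp only [ENNReal.ofReal]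
    rw [integral_withDensity_eq_integral_smul₀
      (f := fun x : ℝ => ((Real.sqrt (2 * π))⁻¹ * Real.exp (-(x ^ 2) / 2)).toNNReal) ?_ f]
    · set F : ℝ → ℝ := fun x =>
        (((Real.sqrt (2 * π))⁻¹ * Real.exp (-(x ^ 2) / 2)).toNNReal : ℝ) • f x with hF
      have hodd : ∀ x, F (-x) = - F x := by
        intro x
        simp only [hF, hf, smul_eq_mul]
        rw [neg_pow, neg_pow]
        ring_nf
      have := MeasureTheory.integral_neg_eq_self F (volume : Measure ℝ)
      have h2 : ∫ x, F x = - ∫ x, F x := by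
        conv_lhs => rw [← this]
        rw [← integral_neg]
        exact integral_congr_ae (Filter.Eventually.of_forall fun x => hodd x)
      have h3 : ∫ x, F x = 0 := by linarith
      simp only [NNReal.smul_def]
      exact h3
    · fun_prop
  -- Part 3 : eigenfunction equation
  · intro x
    have hderiv : ∀ y : ℝ, HasDerivAt f ((1 + b * y ^ 2) * Real.exp (b * y ^ 2 / 2)) y := by
      intro y
      rw [hf]
      have hg : HasDerivAt (fun y : ℝ => b * y ^ 2 / 2) (b * y) y := by
        have := ((hasDerivAt_pow 2 y).const_mul b).div_const 2
        exact this.congr_deriv (by ring)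
      have := (hasDerivAt_id' (𝕜 := ℝ) (x := y)).mul hg.exp
      exact this.congr_deriv (by ring)
    have hd1 : deriv f = fun y => (1 + b * y ^ 2) * Real.exp (b * y ^ 2 / 2) := by
      funext y; exact (hderiv y).deriv
    have hderiv2 : HasDerivAt (deriv f)
        ((3 * b * x + b ^ 2 * x ^ 3) * Real.exp (b * x ^ 2 / 2)) x := by
      rw [hd1]
      have hg : HasDerivAt (fun y : ℝ => b * y ^ 2 / 2) (b * x) x := by
        have := ((hasDerivAt_pow 2 x).const_mul b).div_const 2
        exact this.congr_deriv (by ring)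
      have hp : HasDerivAt (fun y : ℝ => 1 + b * y ^ 2) (2 * b * x) x := by
        have := ((hasDerivAt_pow 2 x).const_mul b).const_add 1
        exact this.congr_deriv (by ring)
      have := hp.mul hg.exp
      exact this.congr_deriv (by ring)
    rw [hderiv2.deriv, hd1, hf]
    have hpos : (0:ℝ) < 1 + b * x ^ 2 := by positivity
    field_simp
    ring
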